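/- Let v = (v_0, v_1, ..., v_k) ∈ P(b^k) with 0 < v_0 < 1. Define u_j ≡ (v_j − v_0 b_j)/(1 − v_0) for j ∈ {1,...,k}. Then (0, u_1, ..., u_k) ∈ P(b^k), and v = v_0·(1, b^k) + (1 − v_0)·(0, u^k); consequently v is not a vertex of P(b^k). -/

import Mathlib

open Finset

/-- The polytope `P(b^k)` defined by the inequalities of the paper; points are
`v = (v_0, (v_1, ..., v_k))` and `(−1)^{b_j}` is written `1 − 2·b_j` for `b_j ∈ {0,1}`. -/
def Pbk {k : ℕ} (b : Fin k → ℝ) : Set (ℝ × (Fin k → ℝ)) :=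
  {v | 0 ≤ v.1 ∧ (∀ j, b j = 0 → 0 ≤ v.2 j) ∧ (∀ j, b j = 1 → v.2 j ≤ 1) ∧
       (∀ j, v.1 + (1 - 2 * b j) * v.2 j ≤ 1 - b j) ∧
       1 - ∑ j, b j ≤ v.1 + ∑ j, (1 - 2 * b j) * v.2 j}

/-- A point of `P(b^k)` with `0 < v_0 < 1` decomposes as a convex combination of
`(1,b^k)` and a point `(0,u^k)` of `P(b^k)`, hence is not a vertex (extreme point). -/
theorem stmt13 {k : ℕ} (b : Fin k → ℝ) (hb : ∀ j, b j = 0 ∨ b j = 1)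
    (v : ℝ × (Fin k → ℝ)) (hv : v ∈ Pbk b) (h0 : 0 < v.1) (h1 : v.1 < 1)
    (u : Fin k → ℝ) (hu : ∀ j, u j = (v.2 j - v.1 * b j) / (1 - v.1)) :
    ((0 : ℝ), u) ∈ Pbk b ∧
    v = v.1 • (((1 : ℝ), b) : ℝ × (Fin k → ℝ)) + (1 - v.1) • (((0 : ℝ), u) : ℝ × (Fin k → ℝ)) ∧
    v ∉ Set.extremePoints ℝ (Pbk b) := by
  obtain ⟨hv0, hv1, hv2, hv3, hv4⟩ := hv
  set t := v.1 with ht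
  have htpos : (0:ℝ) < 1 - t := by linarith
  have hb2 : ∀ j, b j * b j = b j := fun j => by rcases hb j with h | h <;> rw [h] <;> ring
  have huj : ∀ j, (1 - t) * u j = v.2 j - t * b j := fun j => by
    rw [hu j]; field_simp
  have huPbk : ((0 : ℝ), u) ∈ Pbk b := by
    refine ⟨le_refl 0, ?_, ?_, ?_, ?_⟩
    · intro j hj
      have h3 := hv3 j
      have h := huj j
      rw [hj] at h3 h
      nlinarith [hv1 j hj]
    · intro j hj
      have h3 := hv3 j
      have h := huj j
      rw [hj] at h3 h
      nlinarith [hv2 j hj]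
    · intro j
      have h3 := hv3 j
      have h := huj j
      show (0:ℝ) + (1 - 2 * b j) * u j ≤ 1 - b j
      rcases hb j with hj | hj <;> rw [hj] at h3 h ⊢ <;> nlinarith
    · have hsum : (1 - t) * ∑ j, (1 - 2 * b j) * u j
          = ∑ j, (1 - 2 * b j) * v.2 j + t * ∑ j, b j := by
        rw [Finset.mul_sum, Finset.mul_sum, ← Finset.sum_add_distrib]
        apply Finset.sum_congr rfl
        intro j _
        linear_combination (1 - 2 * b j) * huj j + 2 * t * hb2 j
      show 1 - ∑ j, b j ≤ 0 + ∑ j, (1 - 2 * b j) * u j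
      nlinarith [hsum, hv4, htpos]
  have hdec : v = t • (((1 : ℝ), b) : ℝ × (Fin k → ℝ))
      + (1 - t) • (((0 : ℝ), u) : ℝ × (Fin k → ℝ)) := by
    rw [Prod.ext_iff]
    constructor
    · simp [ht]
    · funext j
      have := huj j
      simp only [Prod.snd_add, Prod.smul_snd, Pi.add_apply, Pi.smul_apply, smul_eq_mul]
      linarith
  have h1b : (((1 : ℝ), b) : ℝ × (Fin k → ℝ)) ∈ Pbk b := by
    refine ⟨zero_le_one, fun j hj => by simp [hj], fun j hj => by simp [hj], ?_, ?_⟩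
    · intro j
      show (1:ℝ) + (1 - 2 * b j) * b j ≤ 1 - b j
      rcases hb j with hj | hj <;> rw [hj] <;> norm_num
    · have : ∑ j, (1 - 2 * b j) * b j = -∑ j, b j := by
        rw [← Finset.sum_neg_distrib]
        apply Finset.sum_congr rfl
        intro j _
        linear_combination -2 * hb2 j
      show 1 - ∑ j, b j ≤ 1 + ∑ j, (1 - 2 * b j) * b j
      rw [this]; linarith
  refine ⟨huPbk, hdec, ?_⟩
  intro hext
  obtain ⟨_, hP⟩ := hext
  have hseg : v ∈ openSegment ℝ (((1 : ℝ), b) : ℝ × (Fin k → ℝ)) ((0 : ℝ), u) :=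
    ⟨t, 1 - t, h0, htpos, by ring, hdec.symm⟩
  have heq := hP h1b huPbk hseg
  have : (1 : ℝ) = v.1 := congrArg Prod.fst heq
  linarith
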